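/- Let h : X × Y → E be a measurable kernel with values in a type 2 Banach space E, bounded by M (‖h(x,y)‖ ≤ M), and degenerate in the sense that E[h(X, y)] = 0 for all y and E[h(x, Y)] = 0 for all x, where X_1,…,X_m are i.i.d. copies of X, Y_1,…,Y_n are i.i.d. copies of Y, and the two samples are independent. Then the two-sample U-statistic R = (mn)⁻¹ ∑_{i=1}^m ∑_{j=1}^n h(X_i, Y_j) satisfies E‖R‖² ≤ b² M² / (mn), where b is the type 2 constant of E. -/

import Mathlib

open MeasureTheory ProbabilityTheory

lemma indep_evals {Ω α : Type} [MeasurableSpace Ω] [MeasurableSpace α]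
    {μ : Measure Ω} {k : ℕ} (Z : Fin k → Ω → α) (hZ : ∀ i, Measurable (Z i))
    (hind : iIndepFun Z μ) :
    iIndepFun (fun i (x : Fin k → α) => x i)
      (Measure.map (fun ω i => Z i ω) μ) := by
  have hT : Measurable (fun ω (i : Fin k) => Z i ω) := measurable_pi_lambda _ hZ
  rw [iIndepFun_iff_measure_inter_preimage_eq_mul] at hind ⊢
  intro S sets hsets
  have h1 : ∀ i ∈ S, MeasurableSet ((fun (x : Fin k → α) => x i) ⁻¹' sets i) :=
    fun i hi => (measurable_pi_apply i) (hsets i hi)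
  rw [Measure.map_apply hT (S.measurableSet_biInter h1)]
  have : (fun ω (i : Fin k) => Z i ω) ⁻¹' (⋂ i ∈ S, (fun (x : Fin k → α) => x i) ⁻¹' sets i)
      = ⋂ i ∈ S, Z i ⁻¹' sets i := by
    ext ω; simp
  rw [this, hind S hsets]
  refine Finset.prod_congr rfl fun i hi => ?_
  rw [Measure.map_apply hT (h1 i hi)]
  rfl

lemma integrable_of_bdd {α : Type} [MeasurableSpace α] {ν : Measure α} [IsFiniteMeasure ν]
    {f : α → ℝ} (hf : AEStronglyMeasurable f ν) (C : ℝ) (hC : ∀ x, ‖f x‖ ≤ C) :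
    Integrable f ν :=
  (integrable_const C).mono' hf (Filter.Eventually.of_forall hC)

lemma key_one_sample {E : Type}
    [NormedAddCommGroup E] [NormedSpace ℝ E] [CompleteSpace E]
    [MeasurableSpace E] [BorelSpace E] [SecondCountableTopology E]
    (b : ℝ)
    (hType2 : ∀ (Ω' : Type) (_ : MeasurableSpace Ω') (μ' : Measure Ω'),
      IsProbabilityMeasure μ' → ∀ (k : ℕ) (U : Fin k → Ω' → E),
      iIndepFun U μ' →
      (∀ i, Measurable (U i)) →
      (∀ i, MemLp (U i) 2 μ') →
      (∀ i, ∫ ω, U i ω ∂μ' = 0) →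
      ∫ ω, ‖∑ i, U i ω‖ ^ 2 ∂μ' ≤ b * ∑ i, ∫ ω, ‖U i ω‖ ^ 2 ∂μ')
    {β : Type} [MeasurableSpace β] {k : ℕ}
    (ν : Measure (Fin k → β)) [IsProbabilityMeasure ν]
    (P : Measure β) [IsProbabilityMeasure P]
    (hindep : iIndepFun (fun j (x : Fin k → β) => x j) ν)
    (hmap : ∀ j, Measure.map (fun x : Fin k → β => x j) ν = P)
    (φ : β → E) (hφ : Measurable φ) (C : ℝ) (hC : ∀ x, ‖φ x‖ ≤ C)
    (hmean : ∫ x, φ x ∂P = 0) :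
    ∫ x, ‖∑ j, φ (x j)‖ ^ 2 ∂ν ≤ b * k * ∫ x, ‖φ x‖ ^ 2 ∂P := by
  have hUmeas : ∀ j : Fin k, Measurable (fun x : Fin k → β => φ (x j)) :=
    fun j => hφ.comp (measurable_pi_apply j)
  have hint : ∀ j : Fin k, ∫ x, φ (x j) ∂ν = ∫ x, φ x ∂P := by
    intro j
    rw [← hmap j, integral_map (measurable_pi_apply j).aemeasurable]
    exact (hφ.stronglyMeasurable.aestronglyMeasurable)
  have hint2 : ∀ j : Fin k, ∫ x, ‖φ (x j)‖ ^ 2 ∂ν = ∫ x, ‖φ x‖ ^ 2 ∂P := by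
    intro j
    rw [← hmap j, integral_map (measurable_pi_apply j).aemeasurable]
    exact (((hφ.norm.pow_const 2).stronglyMeasurable).aestronglyMeasurable)
  have main := hType2 (Fin k → β) inferInstance ν inferInstance k
    (fun j x => φ (x j))
    (hindep.comp (fun _ => φ) (fun _ => hφ))
    hUmeas
    (fun j => MemLp.of_bound ((hUmeas j).aestronglyMeasurable) C
      (Filter.Eventually.of_forall fun x => hC (x j)))
    (fun j => by rw [hint j]; exact hmean)
  calc ∫ x, ‖∑ j, φ (x j)‖ ^ 2 ∂ν ≤ b * ∑ j : Fin k, ∫ x, ‖φ (x j)‖ ^ 2 ∂ν := main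
    _ = b * k * ∫ x, ‖φ x‖ ^ 2 ∂P := by
        rw [Finset.sum_congr rfl fun j _ => hint2 j, Finset.sum_const, Finset.card_univ,
          Fintype.card_fin, nsmul_eq_mul, mul_assoc]

/-- Bound for a degenerate bounded two-sample U-statistic with values in a type 2
Banach space: `E‖R‖² ≤ b² M² / (mn)`. -/
theorem degenerate_two_sample_U_statistic_bound
    {𝒳 𝒴 E : Type} [MeasurableSpace 𝒳] [MeasurableSpace 𝒴]
    [NormedAddCommGroup E] [NormedSpace ℝ E] [CompleteSpace E]
    [MeasurableSpace E] [BorelSpace E] [SecondCountableTopology E]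
    {Ω : Type} [MeasurableSpace Ω] (μ : Measure Ω) [IsProbabilityMeasure μ]
    (b M : ℝ) (hb : 0 < b)
    -- `E` is a type 2 Banach space with constant `b`:
    (hType2 : ∀ (Ω' : Type) (_ : MeasurableSpace Ω') (μ' : Measure Ω'),
      IsProbabilityMeasure μ' → ∀ (k : ℕ) (U : Fin k → Ω' → E),
      iIndepFun U μ' →
      (∀ i, Measurable (U i)) →
      (∀ i, MemLp (U i) 2 μ') →
      (∀ i, ∫ ω, U i ω ∂μ' = 0) →
      ∫ ω, ‖∑ i, U i ω‖ ^ 2 ∂μ' ≤ b * ∑ i, ∫ ω, ‖U i ω‖ ^ 2 ∂μ')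
    (m n : ℕ) (hm : 0 < m) (hn : 0 < n)
    (X : Fin m → Ω → 𝒳) (Y : Fin n → Ω → 𝒴)
    (hXmeas : ∀ i, Measurable (X i)) (hYmeas : ∀ j, Measurable (Y j))
    (PX : Measure 𝒳) (PY : Measure 𝒴)
    [IsProbabilityMeasure PX] [IsProbabilityMeasure PY]
    -- the `X_i`'s are i.i.d. with law `PX`, the `Y_j`'s i.i.d. with law `PY`,
    -- and the two samples are independent:
    (hX : ∀ i, Measure.map (X i) μ = PX) (hY : ∀ j, Measure.map (Y j) μ = PY)
    (hXindep : iIndepFun X μ)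
    (hYindep : iIndepFun Y μ)
    (hXY : IndepFun (fun ω i => X i ω) (fun ω j => Y j ω) μ)
    (h : 𝒳 → 𝒴 → E)
    (hmeas : StronglyMeasurable (Function.uncurry h))
    (hbound : ∀ x y, ‖h x y‖ ≤ M)
    -- degeneracy of the kernel:
    (hdeg1 : ∀ y, ∫ x, h x y ∂PX = 0) (hdeg2 : ∀ x, ∫ y, h x y ∂PY = 0) :
    ∫ ω, ‖(m * n : ℝ)⁻¹ • ∑ i, ∑ j, h (X i ω) (Y j ω)‖ ^ 2 ∂μ
      ≤ b ^ 2 * M ^ 2 / (m * n) := by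
  classical
  -- nonemptiness and nonnegativity of M
  have hne𝒳 : Nonempty 𝒳 := by
    by_contra hc
    rw [not_nonempty_iff] at hc
    have h1 : PX Set.univ = 1 := measure_univ
    rw [Set.eq_empty_of_isEmpty (Set.univ : Set 𝒳), measure_empty] at h1
    exact zero_ne_one h1
  have hne𝒴 : Nonempty 𝒴 := by
    by_contra hc
    rw [not_nonempty_iff] at hc
    have h1 : PY Set.univ = 1 := measure_univ
    rw [Set.eq_empty_of_isEmpty (Set.univ : Set 𝒴), measure_empty] at h1
    exact zero_ne_one h1
  have hM : 0 ≤ M :=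
    le_trans (norm_nonneg _) (hbound (Classical.arbitrary 𝒳) (Classical.arbitrary 𝒴))
  have hmE : Measurable (Function.uncurry h) := hmeas.measurable
  have hmx : ∀ x, Measurable (h x) := fun x => hmE.comp measurable_prodMk_left
  -- the joint laws
  set T : Ω → (Fin m → 𝒳) := fun ω i => X i ω with hTdef
  set S : Ω → (Fin n → 𝒴) := fun ω j => Y j ω with hSdef
  have hT : Measurable T := measurable_pi_lambda _ hXmeas
  have hS : Measurable S := measurable_pi_lambda _ hYmeas
  set μX : Measure (Fin m → 𝒳) := Measure.map T μ with hμXdef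
  set μY : Measure (Fin n → 𝒴) := Measure.map S μ with hμYdef
  haveI : IsProbabilityMeasure μX := Measure.isProbabilityMeasure_map hT.aemeasurable
  haveI : IsProbabilityMeasure μY := Measure.isProbabilityMeasure_map hS.aemeasurable
  have hprod : Measure.map (fun ω => (T ω, S ω)) μ = μX.prod μY :=
    (indepFun_iff_map_prod_eq_prod_map_map hT.aemeasurable hS.aemeasurable).mp hXY
  have hmapX : ∀ i, Measure.map (fun x : Fin m → 𝒳 => x i) μX = PX := by
    intro i
    rw [hμXdef, Measure.map_map (measurable_pi_apply i) hT]
    exact hX i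
  have hmapY : ∀ j, Measure.map (fun y : Fin n → 𝒴 => y j) μY = PY := by
    intro j
    rw [hμYdef, Measure.map_map (measurable_pi_apply j) hS]
    exact hY j
  have hindX := indep_evals X hXmeas hXindep
  have hindY := indep_evals Y hYmeas hYindep
  -- the kernel function on the product sample spaces
  set G : (Fin m → 𝒳) × (Fin n → 𝒴) → E := fun p => ∑ i, ∑ j, h (p.1 i) (p.2 j) with hGdef
  have hGm : Measurable G := by
    apply Finset.measurable_sum
    intro i _
    apply Finset.measurable_sum
    intro j _
    have h1 : Measurable fun p : (Fin m → 𝒳) × (Fin n → 𝒴) => (p.1 i, p.2 j) :=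
      (measurable_fst.eval.prodMk measurable_snd.eval)
    exact hmE.comp h1
  have hGbound : ∀ p, ‖G p‖ ≤ m * n * M := by
    intro p
    calc ‖∑ i, ∑ j, h (p.1 i) (p.2 j)‖ ≤ ∑ i : Fin m, ‖∑ j, h (p.1 i) (p.2 j)‖ :=
          norm_sum_le _ _
      _ ≤ ∑ i : Fin m, ∑ j : Fin n, ‖h (p.1 i) (p.2 j)‖ :=
          Finset.sum_le_sum fun i _ => norm_sum_le _ _
      _ ≤ ∑ _i : Fin m, ∑ _j : Fin n, M :=
          Finset.sum_le_sum fun i _ => Finset.sum_le_sum fun j _ => hbound _ _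
      _ = m * n * M := by simp [mul_assoc, mul_comm, mul_left_comm]
  -- integrability of ‖G‖² on the product
  have hGsqm : Measurable fun p => ‖G p‖ ^ 2 := (hGm.norm.pow_const 2)
  have hGsqint : Integrable (fun p => ‖G p‖ ^ 2) (μX.prod μY) := by
    refine integrable_of_bdd hGsqm.aestronglyMeasurable ((m * n * M) ^ 2) fun p => ?_
    rw [Real.norm_eq_abs, abs_of_nonneg (by positivity)]
    exact pow_le_pow_left₀ (norm_nonneg _) (hGbound p) 2
  -- change of variables to the product space
  have step0 : ∫ ω, ‖∑ i, ∑ j, h (X i ω) (Y j ω)‖ ^ 2 ∂μ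
      = ∫ p, ‖G p‖ ^ 2 ∂(μX.prod μY) := by
    have hasm : AEStronglyMeasurable (fun p => ‖G p‖ ^ 2)
        (Measure.map (fun ω => (T ω, S ω)) μ) := by
      rw [hprod]; exact hGsqm.aestronglyMeasurable
    have heq := integral_map (f := fun p => ‖G p‖ ^ 2)
      (hT.prodMk hS).aemeasurable hasm
    rw [hprod] at heq
    exact heq.symm
  -- the inner-sample function
  set H : 𝒳 × (Fin n → 𝒴) → ℝ := fun q => ‖∑ j, h q.1 (q.2 j)‖ ^ 2 with hHdef
  have hHm : Measurable H := by
    refine Measurable.pow_const (Measurable.norm ?_) 2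
    apply Finset.measurable_sum
    intro j _
    exact hmE.comp (measurable_fst.prodMk ((measurable_pi_apply j).comp measurable_snd))
  have hHbound : ∀ q, |H q| ≤ (n * M) ^ 2 := by
    intro q
    rw [hHdef, abs_of_nonneg (by positivity)]
    refine pow_le_pow_left₀ (norm_nonneg _) ?_ 2
    calc ‖∑ j, h q.1 (q.2 j)‖ ≤ ∑ j : Fin n, ‖h q.1 (q.2 j)‖ := norm_sum_le _ _
      _ ≤ ∑ _j : Fin n, M := Finset.sum_le_sum fun j _ => hbound _ _
      _ = n * M := by simp [mul_comm]
  have hHint : Integrable H (PX.prod μY) := by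
    refine integrable_of_bdd hHm.aestronglyMeasurable ((n * M) ^ 2) fun q => ?_
    rw [Real.norm_eq_abs]; exact hHbound q
  -- Step A : conditional on y, bound the x-integral
  have stepA : ∀ yv : Fin n → 𝒴,
      ∫ x, ‖G (x, yv)‖ ^ 2 ∂μX ≤ b * m * ∫ x, H (x, yv) ∂PX := by
    intro yv
    have := key_one_sample b hType2 μX PX hindX hmapX
      (fun x' => ∑ j, h x' (yv j))
      (Finset.measurable_sum Finset.univ fun j _ =>
        hmE.comp (measurable_id.prodMk measurable_const))
      (n * M)
      (fun x' => by
        calc ‖∑ j, h x' (yv j)‖ ≤ ∑ j : Fin n, ‖h x' (yv j)‖ := norm_sum_le _ _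
          _ ≤ ∑ _j : Fin n, M := Finset.sum_le_sum fun j _ => hbound _ _
          _ = n * M := by simp [mul_comm])
      (by
        rw [integral_finset_sum]
        · exact Finset.sum_eq_zero fun j _ => hdeg1 (yv j)
        · intro j _
          refine Integrable.mono' (integrable_const M) ?_
            (Filter.Eventually.of_forall fun x' => hbound x' (yv j))
          exact ((hmE.comp (measurable_id.prodMk measurable_const)).stronglyMeasurable).aestronglyMeasurable)
    exact this
  -- Step B : for each x, bound the y-integral
  have stepB : ∀ x' : 𝒳,
      ∫ yv, H (x', yv) ∂μY ≤ b * n * M ^ 2 := by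
    intro x'
    have key := key_one_sample b hType2 μY PY hindY hmapY (h x') (hmx x') M (hbound x')
      (hdeg2 x')
    have hint : Integrable (fun y => ‖h x' y‖ ^ 2) PY :=
      integrable_of_bdd ((hmx x').norm.pow_const 2).aestronglyMeasurable (M ^ 2)
        (fun y => by
          rw [Real.norm_eq_abs, abs_of_nonneg (by positivity)]
          exact pow_le_pow_left₀ (norm_nonneg _) (hbound x' y) 2)
    have h2 : ∫ y, ‖h x' y‖ ^ 2 ∂PY ≤ M ^ 2 := by
      have := integral_mono hint (integrable_const (M ^ 2))
        (fun y => pow_le_pow_left₀ (norm_nonneg _) (hbound x' y) 2)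
      simpa using this
    refine le_trans key ?_
    have hb' : 0 ≤ b * (n : ℝ) := by positivity
    exact mul_le_mul_of_nonneg_left h2 hb'
  -- assemble
  have hFubini1 : ∫ p, ‖G p‖ ^ 2 ∂(μX.prod μY)
      = ∫ yv, ∫ x, ‖G (x, yv)‖ ^ 2 ∂μX ∂μY :=
    integral_prod_symm _ hGsqint
  have hLHSint : Integrable (fun yv => ∫ x, ‖G (x, yv)‖ ^ 2 ∂μX) μY :=
    hGsqint.integral_prod_right
  have hRHSint : Integrable (fun yv => ∫ x, H (x, yv) ∂PX) μY :=
    hHint.integral_prod_right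
  have hmono1 : ∫ yv, ∫ x, ‖G (x, yv)‖ ^ 2 ∂μX ∂μY
      ≤ ∫ yv, b * m * ∫ x, H (x, yv) ∂PX ∂μY := by
    refine integral_mono hLHSint ?_ stepA
    exact (hRHSint.const_mul _)
  have hswap : ∫ yv, ∫ x, H (x, yv) ∂PX ∂μY = ∫ x, ∫ yv, H (x, yv) ∂μY ∂PX := by
    rw [← integral_prod_symm _ hHint, integral_prod _ hHint]
  have hmono2 : ∫ x, ∫ yv, H (x, yv) ∂μY ∂PX ≤ b * n * M ^ 2 := by
    have := integral_mono hHint.integral_prod_left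
      (integrable_const (b * ↑n * M ^ 2)) stepB
    simpa using this
  have total : ∫ p, ‖G p‖ ^ 2 ∂(μX.prod μY) ≤ b ^ 2 * m * n * M ^ 2 := by
    calc ∫ p, ‖G p‖ ^ 2 ∂(μX.prod μY)
        = ∫ yv, ∫ x, ‖G (x, yv)‖ ^ 2 ∂μX ∂μY := hFubini1
      _ ≤ ∫ yv, b * m * ∫ x, H (x, yv) ∂PX ∂μY := hmono1
      _ = b * m * ∫ yv, ∫ x, H (x, yv) ∂PX ∂μY := integral_const_mul _ _
      _ = b * m * ∫ x, ∫ yv, H (x, yv) ∂μY ∂PX := by rw [hswap]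
      _ ≤ b * m * (b * n * M ^ 2) := by
          apply mul_le_mul_of_nonneg_left hmono2; positivity
      _ = b ^ 2 * m * n * M ^ 2 := by ring
  -- final arithmetic
  have hmn : (0 : ℝ) < (m : ℝ) * n := by
    have : (0:ℝ) < (m:ℝ) := Nat.cast_pos.mpr hm
    have : (0:ℝ) < (n:ℝ) := Nat.cast_pos.mpr hn
    positivity
  have hsmul : ∀ ω, ‖((m : ℝ) * n)⁻¹ • ∑ i, ∑ j, h (X i ω) (Y j ω)‖ ^ 2
      = ((m : ℝ) * n)⁻¹ ^ 2 * ‖∑ i, ∑ j, h (X i ω) (Y j ω)‖ ^ 2 := by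
    intro ω
    rw [norm_smul, Real.norm_eq_abs, abs_of_nonneg (by positivity), mul_pow]
  calc ∫ ω, ‖((m : ℝ) * n)⁻¹ • ∑ i, ∑ j, h (X i ω) (Y j ω)‖ ^ 2 ∂μ
      = ((m : ℝ) * n)⁻¹ ^ 2 * ∫ ω, ‖∑ i, ∑ j, h (X i ω) (Y j ω)‖ ^ 2 ∂μ := by
        rw [← integral_const_mul]
        exact integral_congr_ae (Filter.Eventually.of_forall hsmul)
    _ = ((m : ℝ) * n)⁻¹ ^ 2 * ∫ p, ‖G p‖ ^ 2 ∂(μX.prod μY) := by rw [step0]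
    _ ≤ ((m : ℝ) * n)⁻¹ ^ 2 * (b ^ 2 * m * n * M ^ 2) := by
        apply mul_le_mul_of_nonneg_left total; positivity
    _ = b ^ 2 * M ^ 2 / ((m : ℝ) * n) := by
        field_simp
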